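/- Let n, m ∈ ℕ and let A₁,…,Aₘ, B₁,…,Bₘ, X be n×n complex matrices. Then ‖Σ_{j=1}^m Aⱼᴴ X Bⱼ‖_F ≤ ‖Σ_{j=1}^m Aⱼᴴ Aⱼ‖_op^{1/2} · ‖X · (Σ_{j=1}^m Bⱼ Bⱼᴴ)^{1/2}‖_F. -/

import Mathlib

open Matrix
open scoped ComplexOrder
open scoped Matrix.Norms.L2Operator

noncomputable def ip {n : ℕ} (M N : Matrix (Fin n) (Fin n) ℂ) : ℂ :=
  ∑ i, ∑ k, (starRingEnd ℂ) (M i k) * N i k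

lemma ip_eq_trace {n : ℕ} (M N : Matrix (Fin n) (Fin n) ℂ) :
    ip M N = (Mᴴ * N).trace := by
  simp only [ip, Matrix.trace, Matrix.diag, Matrix.mul_apply, Matrix.conjTranspose_apply]
  rw [Finset.sum_comm]
  rfl

lemma ip_self_re {n : ℕ} (M : Matrix (Fin n) (Fin n) ℂ) :
    (ip M M).re = ∑ i, ∑ k, ‖M i k‖ ^ 2 := by
  simp only [ip, Complex.re_sum]
  congr 1; ext i; congr 1; ext k
  rw [Complex.conj_mul']
  simp [← Complex.ofReal_pow]

lemma cs {ι : Type*} [Fintype ι] (u v : ι → ℂ) :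
    (∑ p, (starRingEnd ℂ) (u p) * v p).re ≤
      Real.sqrt (∑ p, ‖u p‖ ^ 2) * Real.sqrt (∑ p, ‖v p‖ ^ 2) := by
  have h := re_inner_le_norm (𝕜 := ℂ) ((WithLp.equiv 2 (ι → ℂ)).symm u)
    ((WithLp.equiv 2 (ι → ℂ)).symm v)
  simpa [PiLp.inner_apply, RCLike.inner_apply, EuclideanSpace.norm_eq,
    Complex.re_sum, mul_comm] using h

lemma cs3 {m n : ℕ} (u v : Fin m → Matrix (Fin n) (Fin n) ℂ) :
    (∑ j, ip (u j) (v j)).re ≤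
      Real.sqrt (∑ j, (ip (u j) (u j)).re) * Real.sqrt (∑ j, (ip (v j) (v j)).re) := by
  have h := cs (ι := Fin m × Fin n × Fin n) (fun p => u p.1 p.2.1 p.2.2)
    (fun p => v p.1 p.2.1 p.2.2)
  simp only [Fintype.sum_prod_type] at h
  simpa [ip, ip_self_re, Complex.re_sum, Complex.sq_norm, Complex.normSq_apply] using h

lemma ip_mul_le {n : ℕ} (C Y : Matrix (Fin n) (Fin n) ℂ) :
    (ip Y (C * Y)).re ≤ ‖C‖ * ∑ i, ∑ k, ‖Y i k‖ ^ 2 := by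
  have key : ∀ k, (∑ i, (starRingEnd ℂ) (Y i k) * (C * Y) i k).re ≤
      ‖C‖ * ∑ i, ‖Y i k‖ ^ 2 := by
    intro k
    set y : EuclideanSpace ℂ (Fin n) := (WithLp.equiv 2 (Fin n → ℂ)).symm (fun i => Y i k) with hy
    set w : EuclideanSpace ℂ (Fin n) :=
      (WithLp.equiv 2 (Fin n → ℂ)).symm (C.mulVec (fun i => Y i k)) with hw
    have h1 : (∑ i, (starRingEnd ℂ) (Y i k) * (C * Y) i k) = inner ℂ y w := by
      simp [PiLp.inner_apply, RCLike.inner_apply, hy, hw, Matrix.mulVec, Matrix.mul_apply,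
        dotProduct]
      exact Finset.sum_congr rfl fun i _ => mul_comm _ _
    have h2 : ‖w‖ ≤ ‖C‖ * ‖y‖ := C.l2_opNorm_mulVec y
    have h3 : ‖y‖ ^ 2 = ∑ i, ‖Y i k‖ ^ 2 := by
      rw [EuclideanSpace.norm_eq, Real.sq_sqrt (by positivity)]
      rfl
    calc (∑ i, (starRingEnd ℂ) (Y i k) * (C * Y) i k).re
        = RCLike.re (inner ℂ y w : ℂ) := by rw [h1]; rfl
      _ ≤ ‖y‖ * ‖w‖ := re_inner_le_norm y w
      _ ≤ ‖y‖ * (‖C‖ * ‖y‖) := by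
          exact mul_le_mul_of_nonneg_left h2 (norm_nonneg y)
      _ = ‖C‖ * ‖y‖ ^ 2 := by ring
      _ = ‖C‖ * ∑ i, ‖Y i k‖ ^ 2 := by rw [h3]
  calc (ip Y (C * Y)).re = ∑ k, (∑ i, (starRingEnd ℂ) (Y i k) * (C * Y) i k).re := by
        rw [ip, Finset.sum_comm]; simp [Complex.re_sum]
    _ ≤ ∑ k, ‖C‖ * ∑ i, ‖Y i k‖ ^ 2 := Finset.sum_le_sum fun k _ => key k
    _ = ‖C‖ * ∑ i, ∑ k, ‖Y i k‖ ^ 2 := by rw [← Finset.mul_sum, Finset.sum_comm]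

lemma trace_h1 {n m : ℕ} (A B : Fin m → Matrix (Fin n) (Fin n) ℂ)
    (X Y : Matrix (Fin n) (Fin n) ℂ) (hY : Y = ∑ j, (A j)ᴴ * X * B j) :
    ip Y Y = ∑ j, ip (A j * Y) (X * B j) := by
  simp only [ip_eq_trace, ← Matrix.trace_sum]
  congr 1
  nth_rewrite 2 [hY]
  rw [Finset.mul_sum]
  exact Finset.sum_congr rfl fun j _ => by
    rw [Matrix.conjTranspose_mul]; simp only [mul_assoc]

lemma trace_h2 {n m : ℕ} (A : Fin m → Matrix (Fin n) (Fin n) ℂ)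
    (Y : Matrix (Fin n) (Fin n) ℂ) :
    ∑ j, ip (A j * Y) (A j * Y) = ip Y ((∑ j, (A j)ᴴ * A j) * Y) := by
  simp only [ip_eq_trace, ← Matrix.trace_sum]
  congr 1
  rw [Finset.sum_mul, Finset.mul_sum]
  exact Finset.sum_congr rfl fun j _ => by
    rw [Matrix.conjTranspose_mul]; simp only [mul_assoc]

lemma trace_h4 {n m : ℕ} (B : Fin m → Matrix (Fin n) (Fin n) ℂ)
    (X R : Matrix (Fin n) (Fin n) ℂ) (hRH : Rᴴ = R)
    (hRR : R * R = ∑ j, B j * (B j)ᴴ) :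
    ∑ j, ip (X * B j) (X * B j) = ip (X * R) (X * R) := by
  simp only [ip_eq_trace]
  have lhs : ∀ j, ((X * B j)ᴴ * (X * B j)).trace = ((Xᴴ * X) * (B j * (B j)ᴴ)).trace := by
    intro j
    rw [Matrix.conjTranspose_mul]
    calc ((B j)ᴴ * Xᴴ * (X * B j)).trace
        = ((B j)ᴴ * (Xᴴ * X * B j)).trace := by simp only [mul_assoc]
      _ = ((Xᴴ * X * B j) * (B j)ᴴ).trace := Matrix.trace_mul_comm _ _
      _ = ((Xᴴ * X) * (B j * (B j)ᴴ)).trace := by simp only [mul_assoc]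
  calc ∑ j, ((X * B j)ᴴ * (X * B j)).trace
      = ∑ j, ((Xᴴ * X) * (B j * (B j)ᴴ)).trace := Finset.sum_congr rfl fun j _ => lhs j
    _ = ((Xᴴ * X) * ∑ j, B j * (B j)ᴴ).trace := by rw [Finset.mul_sum, Matrix.trace_sum]
    _ = ((Xᴴ * X) * (R * R)).trace := by rw [hRR]
    _ = ((X * R)ᴴ * (X * R)).trace := by
        rw [Matrix.conjTranspose_mul, hRH]
        calc ((Xᴴ * X) * (R * R)).trace
            = ((Xᴴ * X * R) * R).trace := by simp only [mul_assoc]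
          _ = (R * (Xᴴ * X * R)).trace := (Matrix.trace_mul_comm _ _).symm
          _ = (R * Xᴴ * (X * R)).trace := by simp only [mul_assoc]


/-- The Frobenius (Hilbert–Schmidt) norm of a complex matrix. -/
noncomputable def frobeniusNorm {n : ℕ} (M : Matrix (Fin n) (Fin n) ℂ) : ℝ :=
  Real.sqrt (∑ i, ∑ j, ‖M i j‖ ^ 2)

/-- The ℓ²→ℓ² operator norm of a complex matrix. -/
noncomputable def l2OpNorm {n : ℕ} (M : Matrix (Fin n) (Fin n) ℂ) : ℝ :=
  ‖(Matrix.toEuclideanCLM (𝕜 := ℂ) M : EuclideanSpace ℂ (Fin n) →L[ℂ] EuclideanSpace ℂ (Fin n))‖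

/-- A sum of matrices of the form `B Bᴴ` is positive semidefinite. -/
lemma posSemidef_sum_mul_conjTranspose {n m : ℕ} (B : Fin m → Matrix (Fin n) (Fin n) ℂ) :
    (∑ j, B j * (B j)ᴴ).PosSemidef := by
  apply Finset.sum_induction
  · exact fun a b ha hb => ha.add hb
  · exact Matrix.PosSemidef.zero
  · exact fun i _ => Matrix.posSemidef_self_mul_conjTranspose (B i)

/-- Cauchy–Schwarz inequality for elementary operators on matrices, Frobenius norm version:
`‖Σ Aⱼᴴ X Bⱼ‖_F ≤ ‖Σ Aⱼᴴ Aⱼ‖_op^{1/2} · ‖X · (Σ Bⱼ Bⱼᴴ)^{1/2}‖_F`. -/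
theorem frobeniusNorm_sum_conjTranspose_mul_mul_le {n m : ℕ}
    (A B : Fin m → Matrix (Fin n) (Fin n) ℂ) (X : Matrix (Fin n) (Fin n) ℂ) :
    frobeniusNorm (∑ j, (A j)ᴴ * X * B j) ≤
      Real.sqrt (l2OpNorm (∑ j, (A j)ᴴ * A j)) *
        frobeniusNorm (X * ((posSemidef_sum_mul_conjTranspose B).1.eigenvectorUnitary.1 *
          diagonal ((↑) ∘ ((posSemidef_sum_mul_conjTranspose B).1.eigenvalues · |>.sqrt)) *
          (star (posSemidef_sum_mul_conjTranspose B).1.eigenvectorUnitary :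
            Matrix (Fin n) (Fin n) ℂ))) := by
  classical
  have hRH : ((posSemidef_sum_mul_conjTranspose B).1.eigenvectorUnitary.1 *
          diagonal ((↑) ∘ ((posSemidef_sum_mul_conjTranspose B).1.eigenvalues · |>.sqrt)) *
          (star (posSemidef_sum_mul_conjTranspose B).1.eigenvectorUnitary :
            Matrix (Fin n) (Fin n) ℂ))ᴴ =
      ((posSemidef_sum_mul_conjTranspose B).1.eigenvectorUnitary.1 *
          diagonal ((↑) ∘ ((posSemidef_sum_mul_conjTranspose B).1.eigenvalues · |>.sqrt)) *
          (star (posSemidef_sum_mul_conjTranspose B).1.eigenvectorUnitary :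
            Matrix (Fin n) (Fin n) ℂ)) := by
    simp [Matrix.conjTranspose_mul, Matrix.diagonal_conjTranspose, mul_assoc,
      Matrix.star_eq_conjTranspose, Pi.star_def, Function.comp_def, Complex.star_def]
  have hRR : ((posSemidef_sum_mul_conjTranspose B).1.eigenvectorUnitary.1 *
          diagonal ((↑) ∘ ((posSemidef_sum_mul_conjTranspose B).1.eigenvalues · |>.sqrt)) *
          (star (posSemidef_sum_mul_conjTranspose B).1.eigenvectorUnitary :
            Matrix (Fin n) (Fin n) ℂ)) * ((posSemidef_sum_mul_conjTranspose B).1.eigenvectorUnitary.1 *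
          diagonal ((↑) ∘ ((posSemidef_sum_mul_conjTranspose B).1.eigenvalues · |>.sqrt)) *
          (star (posSemidef_sum_mul_conjTranspose B).1.eigenvectorUnitary :
            Matrix (Fin n) (Fin n) ℂ)) = ∑ j, B j * (B j)ᴴ := by
    have hUU : (star (posSemidef_sum_mul_conjTranspose B).1.eigenvectorUnitary :
        Matrix (Fin n) (Fin n) ℂ) * (posSemidef_sum_mul_conjTranspose B).1.eigenvectorUnitary.1 = 1 :=
      Unitary.coe_star_mul_self _
    conv_rhs => rw [(posSemidef_sum_mul_conjTranspose B).1.spectral_theorem, Unitary.conjStarAlgAut_apply]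
    calc _ = (posSemidef_sum_mul_conjTranspose B).1.eigenvectorUnitary.1 *
          (diagonal ((↑) ∘ ((posSemidef_sum_mul_conjTranspose B).1.eigenvalues · |>.sqrt)) *
          ((star (posSemidef_sum_mul_conjTranspose B).1.eigenvectorUnitary :
            Matrix (Fin n) (Fin n) ℂ) * (posSemidef_sum_mul_conjTranspose B).1.eigenvectorUnitary.1) *
          diagonal ((↑) ∘ ((posSemidef_sum_mul_conjTranspose B).1.eigenvalues · |>.sqrt))) *
          (star (posSemidef_sum_mul_conjTranspose B).1.eigenvectorUnitary :
            Matrix (Fin n) (Fin n) ℂ) := by simp only [mul_assoc]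
      _ = _ := by
        rw [hUU, mul_one, diagonal_mul_diagonal]
        congr 3
        ext i
        simp only [Function.comp_apply, ← Complex.ofReal_mul]
        rw [Real.mul_self_sqrt ((posSemidef_sum_mul_conjTranspose B).eigenvalues_nonneg i)]
        rfl
  set R := ((posSemidef_sum_mul_conjTranspose B).1.eigenvectorUnitary.1 *
          diagonal ((↑) ∘ ((posSemidef_sum_mul_conjTranspose B).1.eigenvalues · |>.sqrt)) *
          (star (posSemidef_sum_mul_conjTranspose B).1.eigenvectorUnitary :
            Matrix (Fin n) (Fin n) ℂ)) with hRdef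
  set Y := ∑ j, (A j)ᴴ * X * B j with hYdef
  set C := ∑ j, (A j)ᴴ * A j with hCdef
  have hCnorm : l2OpNorm C = ‖C‖ := rfl
  have fsq : ∀ M : Matrix (Fin n) (Fin n) ℂ, frobeniusNorm M ^ 2 = (ip M M).re := fun M => by
    rw [frobeniusNorm, Real.sq_sqrt (by positivity), ip_self_re]
  have fnonneg : ∀ M : Matrix (Fin n) (Fin n) ℂ, 0 ≤ frobeniusNorm M :=
    fun M => Real.sqrt_nonneg _
  have h1 : ip Y Y = ∑ j, ip (A j * Y) (X * B j) := trace_h1 A B X Y hYdef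
  have h2 : ∑ j, (ip (A j * Y) (A j * Y)).re = (ip Y (C * Y)).re := by
    rw [← Complex.re_sum, trace_h2 A Y, hCdef]
  have h3 : (ip Y (C * Y)).re ≤ ‖C‖ * frobeniusNorm Y ^ 2 := by
    rw [fsq Y, ip_self_re]
    exact ip_mul_le C Y
  have h4 : ∑ j, (ip (X * B j) (X * B j)).re = frobeniusNorm (X * R) ^ 2 := by
    rw [← Complex.re_sum, trace_h4 B X R hRH hRR, ← fsq]
  have key : frobeniusNorm Y ^ 2 ≤
      Real.sqrt ‖C‖ * frobeniusNorm Y * frobeniusNorm (X * R) := by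
    calc frobeniusNorm Y ^ 2 = (∑ j, ip (A j * Y) (X * B j)).re := by rw [fsq, h1]
      _ ≤ Real.sqrt (∑ j, (ip (A j * Y) (A j * Y)).re) *
            Real.sqrt (∑ j, (ip (X * B j) (X * B j)).re) :=
          cs3 (fun j => A j * Y) (fun j => X * B j)
      _ = Real.sqrt ((ip Y (C * Y)).re) * frobeniusNorm (X * R) := by
          rw [h2, h4, Real.sqrt_sq (fnonneg _)]
      _ ≤ Real.sqrt (‖C‖ * frobeniusNorm Y ^ 2) * frobeniusNorm (X * R) :=
          mul_le_mul_of_nonneg_right (Real.sqrt_le_sqrt h3) (fnonneg _)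
      _ = Real.sqrt ‖C‖ * frobeniusNorm Y * frobeniusNorm (X * R) := by
          rw [Real.sqrt_mul (norm_nonneg C), Real.sqrt_sq (fnonneg _)]
  rw [hCnorm]
  rcases eq_or_lt_of_le (fnonneg Y) with h0 | h0
  · rw [← h0]
    exact mul_nonneg (Real.sqrt_nonneg _) (fnonneg _)
  · nlinarith [key, h0, fnonneg (X * R), Real.sqrt_nonneg ‖C‖]
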